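/- Let α : ℝ × ℝ → ℝ be continuous, locally Lipschitz in its second argument, and such that for each fixed t the map x ↦ α(t, x) is strictly increasing with α(t, 0) = 0. If x : ℝ → ℝ is differentiable and satisfies x'(t) = −α(t, x(t)) for all t ≥ 0, and x(0) ≥ 0, then x(t) ≥ 0 for all t ≥ 0. -/
import Mathlib


/-- Sign preservation for the scalar ODE `x' = -α(t, x)` where `α(t, ·)` is a
class K function for every `t` (Proposition 1 of the paper). -/
theorem stmt_0 (α : ℝ × ℝ → ℝ)
    (hcont : Continuous α)
    (hlip : ∀ t : ℝ, LocallyLipschitz (fun x : ℝ => α (t, x)))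
    (hmono : ∀ t : ℝ, StrictMono (fun x : ℝ => α (t, x)))
    (hzero : ∀ t : ℝ, α (t, 0) = 0)
    (x : ℝ → ℝ) (hx : Differentiable ℝ x)
    (hode : ∀ t : ℝ, 0 ≤ t → deriv x t = -α (t, x t))
    (hx0 : 0 ≤ x 0) :
    ∀ t : ℝ, 0 ≤ t → 0 ≤ x t := by
  by_contra h
  push_neg at h
  obtain ⟨t₀, ht₀, hxt₀⟩ := h
  -- S : times in [0, t₀] where x is nonnegative
  set S : Set ℝ := {t | t ∈ Set.Icc 0 t₀ ∧ 0 ≤ x t} with hS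
  have hne : S.Nonempty := ⟨0, ⟨le_refl 0, ht₀⟩, hx0⟩
  have hbdd : BddAbove S := ⟨t₀, fun t ht => ht.1.2⟩
  have hclosed : IsClosed S := by
    have : S = Set.Icc 0 t₀ ∩ x ⁻¹' Set.Ici 0 := by
      ext t; simp [hS, Set.mem_preimage, and_assoc]
    rw [this]
    exact isClosed_Icc.inter (isClosed_Ici.preimage hx.continuous)
  set s := sSup S with hs
  have hsS : s ∈ S := hclosed.csSup_mem hne hbdd
  have hs0 : 0 ≤ s := hsS.1.1
  have hxs : 0 ≤ x s := hsS.2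
  have hst₀ : s < t₀ := by
    rcases lt_or_eq_of_le hsS.1.2 with h' | h'
    · exact h'
    · rw [h'] at hxs; linarith
  -- on (s, t₀), x < 0
  have hneg : ∀ t ∈ Set.Ioo s t₀, x t < 0 := by
    intro t ht
    by_contra hxt
    push_neg at hxt
    have : t ∈ S := ⟨⟨le_trans hs0 ht.1.le, ht.2.le⟩, hxt⟩
    exact absurd (le_csSup hbdd this) (not_le.mpr ht.1)
  -- deriv x > 0 on (s, t₀)
  have hderiv : ∀ t ∈ interior (Set.Icc s t₀), 0 < deriv x t := by
    rw [interior_Icc]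
    intro t ht
    have ht0 : 0 ≤ t := le_trans hs0 ht.1.le
    rw [hode t ht0]
    have : α (t, x t) < α (t, 0) := hmono t (hneg t ht)
    rw [hzero t] at this
    linarith
  have hmonoX : StrictMonoOn x (Set.Icc s t₀) :=
    strictMonoOn_of_deriv_pos (convex_Icc s t₀) hx.continuous.continuousOn hderiv
  have : x s < x t₀ := hmonoX ⟨le_refl s, hst₀.le⟩ ⟨hst₀.le, le_refl t₀⟩ hst₀
  linarith
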